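/- Let H be a real Hilbert space and e ∈ H a unit vector; for x ∈ H write x₁ = ⟪e,x⟫ and x̄ = x − x₁·e. Then the map h defined on the open half-space H⁺ = {x ∈ H : ⟪e,x⟫ > 0} by h(x) = ((‖x‖² − 1)/(2·x₁))·e + (1/x₁)·x̄ is a bijection from H⁺ onto H. -/

import Mathlib

open scoped RealInnerProductSpace

/-- A quadratic with positive leading coefficient and negative constant term has at most one
positive root. -/
lemma quad_unique_pos_root {A a s t : ℝ} (hA : 0 < A) (hs : 0 < s) (ht : 0 < t)
    (h1 : A * s ^ 2 - 2 * a * s - 1 = 0) (h2 : A * t ^ 2 - 2 * a * t - 1 = 0) : s = t := by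
  by_contra hne
  have hfac : (s - t) * (A * (s + t) - 2 * a) = 0 := by linear_combination h1 - h2
  have h3 : A * (s + t) = 2 * a := by
    rcases mul_eq_zero.mp hfac with h | h
    · exact absurd (sub_eq_zero.mp h) hne
    · linarith
  have h4 : A * s * t = -1 := by linear_combination s * h3 - h1
  nlinarith [mul_pos (mul_pos hA hs) ht]

theorem halfspace_model_bijection {H : Type*} [NormedAddCommGroup H] [InnerProductSpace ℝ H]
    (e : H) (he : ‖e‖ = 1) :
    Set.BijOn
      (fun x : H => ((‖x‖ ^ 2 - 1) / (2 * ⟪e, x⟫)) • e + (⟪e, x⟫)⁻¹ • (x - ⟪e, x⟫ • e))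
      {x : H | 0 < ⟪e, x⟫} Set.univ := by
  set f : H → H :=
    fun x : H => ((‖x‖ ^ 2 - 1) / (2 * ⟪e, x⟫)) • e + (⟪e, x⟫)⁻¹ • (x - ⟪e, x⟫ • e) with hf
  have hee : ⟪e, e⟫ = (1 : ℝ) := by
    rw [real_inner_self_eq_norm_sq, he]; norm_num
  have horth : ∀ x : H, ⟪e, x - ⟪e, x⟫ • e⟫ = 0 := by
    intro x; simp [inner_sub_right, real_inner_smul_right, hee, he]
  have hnorm : ∀ x : H, ‖x - ⟪e, x⟫ • e‖ ^ 2 = ‖x‖ ^ 2 - ⟪e, x⟫ ^ 2 := by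
    intro x
    have h1 : ⟪x, ⟪e, x⟫ • e⟫ = ⟪e, x⟫ ^ 2 := by
      rw [real_inner_smul_right, real_inner_comm]; ring
    have h2 : ‖⟪e, x⟫ • e‖ ^ 2 = ⟪e, x⟫ ^ 2 := by
      rw [norm_smul, he]; simp [sq_abs]
    rw [norm_sub_sq_real, h1, h2]; ring
  have hA : ∀ x : H, ⟪e, f x⟫ = (‖x‖ ^ 2 - 1) / (2 * ⟪e, x⟫) := by
    intro x
    simp [hf, inner_add_right, real_inner_smul_right, hee, horth x, he]
  have hB : ∀ x : H, f x - ⟪e, f x⟫ • e = (⟪e, x⟫)⁻¹ • (x - ⟪e, x⟫ • e) := by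
    intro x
    rw [hA x]
    simp [hf]
  refine ⟨fun x _ => Set.mem_univ _, ?_, ?_⟩
  · -- injectivity
    intro x hx x' hx' hfe
    simp only [Set.mem_setOf_eq] at hx hx'
    set s := ⟪e, x⟫ with hsdef
    set t := ⟪e, x'⟫ with htdef
    have hs0 : s ≠ 0 := ne_of_gt hx
    have ht0 : t ≠ 0 := ne_of_gt hx'
    -- common value a
    have ha : (‖x‖ ^ 2 - 1) / (2 * s) = (‖x'‖ ^ 2 - 1) / (2 * t) := by
      rw [← hA x, ← hA x', hfe]
    set a := (‖x‖ ^ 2 - 1) / (2 * s) with hadef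
    -- common orthogonal part v
    have hv : s⁻¹ • (x - s • e) = t⁻¹ • (x' - t • e) := by
      rw [← hB x, ← hB x', hfe]
    set v := s⁻¹ • (x - s • e) with hvdef
    have hxbar : x - s • e = s • v := by
      rw [hvdef, smul_inv_smul₀ hs0]
    have hxbar' : x' - t • e = t • v := by
      rw [hv, smul_inv_smul₀ ht0]
    have hnx : ‖x‖ ^ 2 = s ^ 2 + s ^ 2 * ‖v‖ ^ 2 := by
      have := hnorm x
      rw [hxbar, norm_smul] at this
      have : (|s| * ‖v‖) ^ 2 = ‖x‖ ^ 2 - s ^ 2 := by simpa [Real.norm_eq_abs] using this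
      linear_combination ‖v‖ ^ 2 * sq_abs s - this
    have hnx' : ‖x'‖ ^ 2 = t ^ 2 + t ^ 2 * ‖v‖ ^ 2 := by
      have := hnorm x'
      rw [hxbar', norm_smul] at this
      have : (|t| * ‖v‖) ^ 2 = ‖x'‖ ^ 2 - t ^ 2 := by simpa [Real.norm_eq_abs] using this
      linear_combination ‖v‖ ^ 2 * sq_abs t - this
    have h1 : (1 + ‖v‖ ^ 2) * s ^ 2 - 2 * a * s - 1 = 0 := by
      have : a * (2 * s) = ‖x‖ ^ 2 - 1 := by
        rw [hadef]; field_simp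
      linear_combination (-1 : ℝ) * hnx - this
    have h2 : (1 + ‖v‖ ^ 2) * t ^ 2 - 2 * a * t - 1 = 0 := by
      have : a * (2 * t) = ‖x'‖ ^ 2 - 1 := by
        rw [ha]; field_simp
      linear_combination (-1 : ℝ) * hnx' - this
    have hst : s = t :=
      quad_unique_pos_root (by positivity) hx hx' h1 h2
    have : x - s • e = x' - t • e := by rw [hxbar, hxbar', hst]
    have := congrArg (· + s • e) this
    simpa [hst, sub_add_cancel] using this
  · -- surjectivity
    intro y _
    set a := ⟪e, y⟫ with hadef
    set v := y - a • e with hvdef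
    set A := 1 + ‖v‖ ^ 2 with hAdef
    have hApos : 0 < A := by positivity
    set s := Real.sqrt (a ^ 2 + A) with hsdef
    have hs2 : s ^ 2 = a ^ 2 + A := Real.sq_sqrt (by positivity)
    have hsa : -a < s := by
      nlinarith [Real.sqrt_nonneg (a ^ 2 + A), hs2]
    set t := (a + s) / A with htdef
    have ht : 0 < t := div_pos (by linarith) hApos
    have ht0 : t ≠ 0 := ne_of_gt ht
    have hAt : A * t = a + s := by
      rw [htdef]; field_simp
    have h6 : A * A * t ^ 2 - 2 * a * (A * t) - A = 0 := by
      linear_combination (A * t + s - a) * hAt + hs2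
    have hquad : A * t ^ 2 - 2 * a * t - 1 = 0 := by
      have h7 : A * (A * t ^ 2 - 2 * a * t - 1) = 0 := by linear_combination h6
      rcases mul_eq_zero.mp h7 with h | h
      · exact absurd h hApos.ne'
      · exact h
    set x := t • e + t • v with hxdef
    have hev : ⟪e, v⟫ = 0 := horth y
    have hex : ⟪e, x⟫ = t := by
      simp [hxdef, inner_add_right, real_inner_smul_right, hee, hev, he]
    refine ⟨x, by simpa [Set.mem_setOf_eq, hex] using ht, ?_⟩
    have hxsub : x - ⟪e, x⟫ • e = t • v := by
      rw [hex, hxdef]; abel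
    have hnx : ‖x‖ ^ 2 = A * t ^ 2 := by
      have h1 : ⟪t • e, t • v⟫ = 0 := by
        simp [real_inner_smul_left, real_inner_smul_right, hev]
      have h2 := norm_add_sq_real (t • e) (t • v)
      rw [h1, norm_smul, norm_smul, he, Real.norm_eq_abs] at h2
      rw [hxdef, h2, hAdef]
      linear_combination (1 + ‖v‖ ^ 2) * sq_abs t
    have hcoef : (‖x‖ ^ 2 - 1) / (2 * ⟪e, x⟫) = a := by
      rw [hex, hnx]
      field_simp
      linear_combination hquad
    show ((‖x‖ ^ 2 - 1) / (2 * ⟪e, x⟫)) • e + (⟪e, x⟫)⁻¹ • (x - ⟪e, x⟫ • e) = y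
    rw [hcoef, hxsub, hex, smul_smul, inv_mul_cancel₀ ht0, one_smul, hvdef]
    abel
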